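/- Let A be a metric space, and α₁, α₂ isometric involutions of A. Suppose X₁, X₂, P₁, P₂ are pairwise disjoint finite subsets of A such that α_i(X_i) = X_i and α_i(P₁) = P₂ for i = 1, 2. Then C₁ = X₁ ∪ X₂ ∪ P₁ and C₂ = X₁ ∪ X₂ ∪ P₂ are homometric: the multisets {d(x,y) : x,y ∈ C₁, unordered pairs} and {d(x,y) : x,y ∈ C₂} are equal. -/

import Mathlib

open Finset

/-- The multiset of pairwise distances of a finite subset of a metric space,
over (ordered versions of) unordered pairs of distinct points. -/
noncomputable def distMultiset {A : Type*} [MetricSpace A] [DecidableEq A] (C : Finset A) : Multiset ℝ :=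
  ((C ×ˢ C).filter fun p => p.1 ≠ p.2).val.map fun p => dist p.1 p.2

/-- Piecewise map used in the homometric construction. -/
noncomputable def mapF {A : Type*} [MetricSpace A] [DecidableEq A] (α₁ α₂ : A ≃ᵢ A)
    (X₂ P : Finset A) (p : A × A) : A × A :=
  if p.1 ∈ P ∨ p.2 ∈ P then
    (if p.1 ∈ X₂ ∨ p.2 ∈ X₂ then (α₂ p.1, α₂ p.2) else (α₁ p.1, α₁ p.2))
  else p

lemma mapF_aux {A : Type*} [MetricSpace A] [DecidableEq A]
    (α₁ α₂ : A ≃ᵢ A) (hα₁ : ∀ a, α₁ (α₁ a) = a) (hα₂ : ∀ a, α₂ (α₂ a) = a)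
    (X₁ X₂ P₁ P₂ : Finset A)
    (h₁₂ : Disjoint X₁ X₂) (h₁P₁ : Disjoint X₁ P₁) (h₁P₂ : Disjoint X₁ P₂)
    (h₂P₁ : Disjoint X₂ P₁) (h₂P₂ : Disjoint X₂ P₂)
    (hX₁ : X₁.image α₁ = X₁) (hX₂ : X₂.image α₂ = X₂)
    (hP₁ : P₁.image α₁ = P₂) (hP₂ : P₁.image α₂ = P₂) :
    ∀ p ∈ ((X₁ ∪ X₂ ∪ P₁) ×ˢ (X₁ ∪ X₂ ∪ P₁)).filter (fun p => p.1 ≠ p.2),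
      mapF α₁ α₂ X₂ P₁ p ∈ ((X₁ ∪ X₂ ∪ P₂) ×ˢ (X₁ ∪ X₂ ∪ P₂)).filter (fun p => p.1 ≠ p.2)
      ∧ mapF α₁ α₂ X₂ P₂ (mapF α₁ α₂ X₂ P₁ p) = p
      ∧ dist (mapF α₁ α₂ X₂ P₁ p).1 (mapF α₁ α₂ X₂ P₁ p).2 = dist p.1 p.2 := by
  -- membership helpers
  have m1X : ∀ a, a ∈ X₁ → α₁ a ∈ X₁ := fun a ha => hX₁ ▸ mem_image_of_mem _ ha
  have m1P : ∀ a, a ∈ P₁ → α₁ a ∈ P₂ := fun a ha => hP₁ ▸ mem_image_of_mem _ ha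
  have m2X : ∀ a, a ∈ X₂ → α₂ a ∈ X₂ := fun a ha => hX₂ ▸ mem_image_of_mem _ ha
  have m2P : ∀ a, a ∈ P₁ → α₂ a ∈ P₂ := fun a ha => hP₂ ▸ mem_image_of_mem _ ha
  have d12 := Finset.disjoint_left.mp h₁₂
  have d1P1 := Finset.disjoint_left.mp h₁P₁
  have d1P2 := Finset.disjoint_left.mp h₁P₂
  have d2P1 := Finset.disjoint_left.mp h₂P₁
  have d2P2 := Finset.disjoint_left.mp h₂P₂
  rintro ⟨x, y⟩ hp
  simp only [mem_filter, mem_product, mem_union] at hp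
  obtain ⟨⟨hx, hy⟩, hne⟩ := hp
  by_cases hPc : x ∈ P₁ ∨ y ∈ P₁
  · by_cases hXc : x ∈ X₂ ∨ y ∈ X₂
    · -- use α₂; both x and y are in X₂ ∪ P₁
      have hx' : x ∈ X₂ ∨ x ∈ P₁ := by
        rcases hx with (h | h) | h
        · exfalso
          rcases hPc with hp | hp
          · exact d1P1 h hp
          · rcases hXc with hq | hq
            · exact d12 h hq
            · exact d2P1 hq hp
        · exact Or.inl h
        · exact Or.inr h
      have hy' : y ∈ X₂ ∨ y ∈ P₁ := by
        rcases hy with (h | h) | h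
        · exfalso
          rcases hPc with hp | hp
          · rcases hXc with hq | hq
            · exact d2P1 hq hp
            · exact d12 h hq
          · exact d1P1 h hp
        · exact Or.inl h
        · exact Or.inr h
      have hPc' : α₂ x ∈ P₂ ∨ α₂ y ∈ P₂ := by
        rcases hPc with h | h
        · exact Or.inl (m2P _ h)
        · exact Or.inr (m2P _ h)
      have hXc' : α₂ x ∈ X₂ ∨ α₂ y ∈ X₂ := by
        rcases hXc with h | h
        · exact Or.inl (m2X _ h)
        · exact Or.inr (m2X _ h)
      simp only [mapF, if_pos hPc, if_pos hXc, if_pos hPc', if_pos hXc']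
      refine ⟨?_, ?_, ?_⟩
      · simp only [mem_filter, mem_product, mem_union]
        refine ⟨⟨?_, ?_⟩, ?_⟩
        · rcases hx' with h | h
          · exact Or.inl (Or.inr (m2X _ h))
          · exact Or.inr (m2P _ h)
        · rcases hy' with h | h
          · exact Or.inl (Or.inr (m2X _ h))
          · exact Or.inr (m2P _ h)
        · intro h; exact hne (α₂.injective h)
      · simp [hα₂]
      · exact α₂.dist_eq x y
    · -- use α₁; both x and y are in X₁ ∪ P₁
      have hxn2 : x ∉ X₂ := fun h => hXc (Or.inl h)
      have hyn2 : y ∉ X₂ := fun h => hXc (Or.inr h)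
      have hx' : x ∈ X₁ ∨ x ∈ P₁ := by
        rcases hx with (h | h) | h
        · exact Or.inl h
        · exact absurd h hxn2
        · exact Or.inr h
      have hy' : y ∈ X₁ ∨ y ∈ P₁ := by
        rcases hy with (h | h) | h
        · exact Or.inl h
        · exact absurd h hyn2
        · exact Or.inr h
      have hPc' : α₁ x ∈ P₂ ∨ α₁ y ∈ P₂ := by
        rcases hPc with h | h
        · exact Or.inl (m1P _ h)
        · exact Or.inr (m1P _ h)
      have hx'' : α₁ x ∈ X₁ ∨ α₁ x ∈ P₂ := by
        rcases hx' with h | h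
        · exact Or.inl (m1X _ h)
        · exact Or.inr (m1P _ h)
      have hy'' : α₁ y ∈ X₁ ∨ α₁ y ∈ P₂ := by
        rcases hy' with h | h
        · exact Or.inl (m1X _ h)
        · exact Or.inr (m1P _ h)
      have hXc' : ¬ (α₁ x ∈ X₂ ∨ α₁ y ∈ X₂) := by
        rintro (h | h)
        · rcases hx'' with h' | h'
          · exact d12 h' h
          · exact d2P2 h h'
        · rcases hy'' with h' | h'
          · exact d12 h' h
          · exact d2P2 h h'
      simp only [mapF, if_pos hPc, if_neg hXc, if_pos hPc', if_neg hXc']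
      refine ⟨?_, ?_, ?_⟩
      · simp only [mem_filter, mem_product, mem_union]
        refine ⟨⟨?_, ?_⟩, ?_⟩
        · rcases hx'' with h | h
          · exact Or.inl (Or.inl h)
          · exact Or.inr h
        · rcases hy'' with h | h
          · exact Or.inl (Or.inl h)
          · exact Or.inr h
        · intro h; exact hne (α₁.injective h)
      · simp [hα₁]
      · exact α₁.dist_eq x y
  · -- identity; both x and y are in X₁ ∪ X₂
    have hxn : x ∉ P₁ := fun h => hPc (Or.inl h)
    have hyn : y ∉ P₁ := fun h => hPc (Or.inr h)
    have hx' : x ∈ X₁ ∨ x ∈ X₂ := by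
      rcases hx with (h | h) | h
      · exact Or.inl h
      · exact Or.inr h
      · exact absurd h hxn
    have hy' : y ∈ X₁ ∨ y ∈ X₂ := by
      rcases hy with (h | h) | h
      · exact Or.inl h
      · exact Or.inr h
      · exact absurd h hyn
    have hPc' : ¬ (x ∈ P₂ ∨ y ∈ P₂) := by
      rintro (h | h)
      · rcases hx' with h' | h'
        · exact d1P2 h' h
        · exact d2P2 h' h
      · rcases hy' with h' | h'
        · exact d1P2 h' h
        · exact d2P2 h' h
    simp only [mapF]
    rw [if_neg hPc, if_neg hPc']
    refine ⟨?_, rfl, rfl⟩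
    simp only [mem_filter, mem_product, mem_union]
    exact ⟨⟨Or.inl hx', Or.inl hy'⟩, hne⟩

/-- Construction of homometric pairs via a pair of isometric involutions:
if `α_i` fixes `X_i` setwise and exchanges `P₁` with `P₂`, and
`X₁, X₂, P₁, P₂` are pairwise disjoint, then `C₁ = X₁ ∪ X₂ ∪ P₁` and
`C₂ = X₁ ∪ X₂ ∪ P₂` have the same multiset of pairwise distances. -/
theorem involution_pair_homometric {A : Type*} [MetricSpace A] [DecidableEq A]
    (α₁ α₂ : A ≃ᵢ A) (hα₁ : ∀ a, α₁ (α₁ a) = a) (hα₂ : ∀ a, α₂ (α₂ a) = a)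
    (X₁ X₂ P₁ P₂ : Finset A)
    (h₁₂ : Disjoint X₁ X₂) (h₁P₁ : Disjoint X₁ P₁) (h₁P₂ : Disjoint X₁ P₂)
    (h₂P₁ : Disjoint X₂ P₁) (h₂P₂ : Disjoint X₂ P₂) (hP : Disjoint P₁ P₂)
    (hX₁ : X₁.image α₁ = X₁) (hX₂ : X₂.image α₂ = X₂)
    (hP₁ : P₁.image α₁ = P₂) (hP₂ : P₁.image α₂ = P₂) :
    distMultiset (X₁ ∪ X₂ ∪ P₁) = distMultiset (X₁ ∪ X₂ ∪ P₂) := by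
  have hP₁' : P₂.image α₁ = P₁ := by
    rw [← hP₁, Finset.image_image]
    simpa [Function.comp_def] using Finset.image_congr (fun a _ => hα₁ a) |>.trans Finset.image_id
  have hP₂' : P₂.image α₂ = P₁ := by
    rw [← hP₂, Finset.image_image]
    simpa [Function.comp_def] using Finset.image_congr (fun a _ => hα₂ a) |>.trans Finset.image_id
  set S₁ := ((X₁ ∪ X₂ ∪ P₁) ×ˢ (X₁ ∪ X₂ ∪ P₁)).filter (fun p => p.1 ≠ p.2) with hS₁
  set S₂ := ((X₁ ∪ X₂ ∪ P₂) ×ˢ (X₁ ∪ X₂ ∪ P₂)).filter (fun p => p.1 ≠ p.2) with hS₂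
  have key := mapF_aux α₁ α₂ hα₁ hα₂ X₁ X₂ P₁ P₂ h₁₂ h₁P₁ h₁P₂ h₂P₁ h₂P₂ hX₁ hX₂ hP₁ hP₂
  have key' := mapF_aux α₁ α₂ hα₁ hα₂ X₁ X₂ P₂ P₁ h₁₂ h₁P₂ h₁P₁ h₂P₂ h₂P₁ hX₁ hX₂ hP₁' hP₂'
  set f := mapF α₁ α₂ X₂ P₁ with hf
  set g := mapF α₁ α₂ X₂ P₂ with hg
  have himg : S₁.image f = S₂ := by
    apply Finset.Subset.antisymm
    · intro q hq
      obtain ⟨p, hp, rfl⟩ := Finset.mem_image.mp hq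
      exact (key p hp).1
    · intro q hq
      obtain ⟨hmem, hgf, -⟩ := key' q hq
      exact Finset.mem_image.mpr ⟨g q, hmem, hgf⟩
  have hinj : Set.InjOn f S₁ := by
    intro p hp q hq hfe
    have := (key p hp).2.1
    have h2 := (key q hq).2.1
    rw [← this, ← h2, hfe]
  have hval : S₂.val = S₁.val.map f := by
    rw [← himg, Finset.image_val_of_injOn hinj]
  show S₁.val.map (fun p => dist p.1 p.2) = S₂.val.map (fun p => dist p.1 p.2)
  rw [hval, Multiset.map_map]
  apply Multiset.map_congr rfl
  intro p hp
  exact ((key p hp).2.2).symm
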